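/- arXiv:1310.2270 — 3 statements merged into one kernel-verified Lean document; each statement's English description precedes it below -/
import Mathlib

section
/- Let m ≥ 3 be an integer. Then the kernel of the reduction homomorphism GL_N(ℤ) → GL_N(ℤ/mℤ) is torsion-free. -/
open Finset in
lemma minkowski_prime_aux (N : ℕ) (d : ℤ) (hd : 3 ≤ d)
    (p : ℕ) (hp : p.Prime) (A : Matrix (Fin N) (Fin N) ℤ)
    (heq : ((1 : Matrix (Fin N) (Fin N) ℤ) + d • A) ^ p = 1)
    (i j : Fin N) : d ∣ 2 * A i j := by
  have hd0 : d ≠ 0 := by omega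
  have hexp : ∑ k ∈ range (p + 1), (d • A) ^ k * ((1:Matrix (Fin N) (Fin N) ℤ)) ^ (p - k) * (p.choose k : ℕ) = 1 := by
    rw [← Commute.add_pow (Commute.one_right (d • A)), add_comm]; exact heq
  have hexp' : ∑ k ∈ range (p + 1), (p.choose k : ℤ) • (d ^ k • (A ^ k)) = (1 : Matrix (Fin N) (Fin N) ℤ) := by
    rw [← hexp]
    apply Finset.sum_congr rfl
    intro k _
    rw [smul_pow, one_pow, mul_one, ← (Nat.cast_commute (p.choose k) (d ^ k • A ^ k)).eq,
      ← nsmul_eq_mul, ← Nat.cast_smul_eq_nsmul ℤ]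
  set c : ℕ → ℤ := fun k => (p.choose k : ℤ) * (d ^ k * (A ^ k) i j) with hc
  have hent : ∑ k ∈ range (p + 1), c k = (1 : Matrix (Fin N) (Fin N) ℤ) i j := by
    have := congrArg (fun M : Matrix (Fin N) (Fin N) ℤ => M i j) hexp'
    simp only [Matrix.sum_apply, Matrix.smul_apply, smul_eq_mul] at this
    exact this
  have hc0 : c 0 = (1 : Matrix (Fin N) (Fin N) ℤ) i j := by simp [hc]
  have h1 : ∑ k ∈ range p, c (k + 1) = 0 := by
    have := Finset.sum_range_succ' c p
    rw [hent] at this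
    linarith [this, hc0]
  have hp2 : 2 ≤ p := hp.two_le
  obtain ⟨q, hq, hq1⟩ : ∃ q, p = q + 1 ∧ 1 ≤ q := ⟨p - 1, by omega, by omega⟩
  have h2 : c 1 + ∑ k ∈ range q, c (k + 2) = 0 := by
    have := Finset.sum_range_succ' (fun k => c (k + 1)) q
    rw [← hq, h1] at this
    simp only [zero_add, add_assoc, Nat.reduceAdd] at this
    linarith [this]
  have hc1 : c 1 = (p : ℤ) * (d * A i j) := by simp [hc]
  have hmain : (p : ℤ) * (d * A i j) = -∑ k ∈ range q, c (k + 2) := by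
    rw [← hc1]; linarith [h2]
  -- d^2 divides each term of the sum
  have hsq : d ^ 2 ∣ ∑ k ∈ range q, c (k + 2) := by
    apply Finset.dvd_sum
    intro k _
    exact Dvd.dvd.mul_left (dvd_mul_of_dvd_left (pow_dvd_pow d (by omega)) _) _
  have hdsq : d ∣ (p : ℤ) * A i j := by
    have : d * d ∣ d * ((p : ℤ) * A i j) := by
      rw [show d * ((p : ℤ) * A i j) = (p : ℤ) * (d * A i j) by ring, hmain]
      rw [← pow_two] at *
      exact (hsq.neg_right)
    exact (mul_dvd_mul_iff_left hd0).mp this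
  by_cases hp2' : p = 2
  · subst hp2'; exact_mod_cast hdsq
  · -- p is odd; show d ∣ A i j
    have hdA : d ∣ A i j := by
      by_cases hpd : (p : ℤ) ∣ d
      · -- p ∣ d : use p * d^2 dividing every term
        have hterm : ∀ k ∈ range q, (p : ℤ) * d ^ 2 ∣ c (k + 2) := by
          intro k hk
          have hkq : k < q := Finset.mem_range.mp hk
          rcases lt_or_eq_of_le (show k + 2 ≤ p by omega) with hlt | heqp
          · have hch : (p : ℤ) ∣ (p.choose (k + 2) : ℤ) := by
              exact_mod_cast Int.natCast_dvd_natCast.mpr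
                (Nat.Prime.dvd_choose_self hp (by omega) hlt)
            exact mul_dvd_mul hch (dvd_mul_of_dvd_left (pow_dvd_pow d (by omega)) _)
          · -- k + 2 = p : term is d^p * A^p i j
            have hchoose : p.choose (k + 2) = 1 := by rw [heqp, Nat.choose_self]
            rw [hc]
            simp only [hchoose, Nat.cast_one, one_mul]
            apply dvd_mul_of_dvd_left
            have hstep : (p : ℤ) * d ^ 2 ∣ d ^ (k + 2 - 2) * d ^ 2 :=
              mul_dvd_mul (dvd_trans hpd (dvd_pow_self d (by omega))) dvd_rfl
            calc (p : ℤ) * d ^ 2 ∣ d ^ (k + 2 - 2) * d ^ 2 := hstep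
              _ = d ^ (k + 2) := by rw [← pow_add]; norm_num
        have hsum : (p : ℤ) * d ^ 2 ∣ (p : ℤ) * (d * A i j) := by
          rw [hmain]
          exact (Finset.dvd_sum hterm).neg_right
        have hp0 : (p : ℤ) ≠ 0 := by positivity
        have := (mul_dvd_mul_iff_left hp0).mp hsum
        rw [pow_two] at this
        exact (mul_dvd_mul_iff_left hd0).mp this
      · have hcop : IsCoprime d (p : ℤ) :=
          ((Nat.prime_iff_prime_int.mp hp).coprime_iff_not_dvd.mpr
            (fun h => hpd h)).symm
        exact hcop.dvd_of_dvd_mul_left hdsq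
    exact Dvd.dvd.mul_left hdA 2

open Finset in
lemma minkowski_prime_step (N m : ℕ) (hm : 3 ≤ m) (p : ℕ) (hp : p.Prime)
    (g : Matrix.GeneralLinearGroup (Fin N) ℤ)
    (hg : ∀ i j, (m : ℤ) ∣ (((g : Matrix (Fin N) (Fin N) ℤ)) - 1) i j)
    (hpow : g ^ p = 1) : g = 1 := by
  by_contra hne
  set M : Matrix (Fin N) (Fin N) ℤ := (g : Matrix (Fin N) (Fin N) ℤ) - 1 with hM
  have hMne : M ≠ 0 := by
    intro h0
    apply hne
    apply Units.ext
    have : (g : Matrix (Fin N) (Fin N) ℤ) = 1 := by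
      have := sub_eq_zero.mp h0
      exact this
    exact this
  obtain ⟨i0, j0, hij0⟩ : ∃ i j, M i j ≠ 0 := by
    by_contra h
    push_neg at h
    exact hMne (by ext i j; simp [h])
  set d : ℤ := (univ : Finset (Fin N × Fin N)).gcd (fun x => M x.1 x.2) with hdd
  have hd0 : d ≠ 0 := by
    intro h
    exact hij0 (Finset.gcd_eq_zero_iff.mp h (i0, j0) (mem_univ _))
  have hdnn : 0 ≤ d := by
    have := Finset.normalize_gcd (s := (univ : Finset (Fin N × Fin N)))
      (f := fun x => M x.1 x.2) (α := ℤ)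
    rw [← hdd] at this
    rw [← this, ← Int.abs_eq_normalize]
    exact abs_nonneg _
  have hmd : (m : ℤ) ∣ d := Finset.dvd_gcd fun x _ => hg x.1 x.2
  have hd3 : 3 ≤ d := by
    have : (m : ℤ) ≤ d := Int.le_of_dvd (lt_of_le_of_ne hdnn (Ne.symm hd0)) hmd
    have : (3 : ℤ) ≤ (m : ℤ) := by exact_mod_cast hm
    omega
  obtain ⟨B, hB, hB1⟩ := Finset.extract_gcd (fun x : Fin N × Fin N => M x.1 x.2)
    ⟨(i0, j0), mem_univ _⟩
  set A : Matrix (Fin N) (Fin N) ℤ := Matrix.of fun i j => B (i, j) with hA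
  have hMA : M = d • A := by
    ext i j
    simpa [← hdd, hA] using hB (i, j) (mem_univ _)
  have hgm : (g : Matrix (Fin N) (Fin N) ℤ) = 1 + d • A := by
    rw [← hMA, hM]; abel
  have heq : ((1 : Matrix (Fin N) (Fin N) ℤ) + d • A) ^ p = 1 := by
    rw [← hgm]
    have := congrArg (Units.val) hpow
    simpa [Units.val_pow_eq_pow_val] using this
  have hdvd : ∀ i j, d ∣ 2 * A i j := fun i j =>
    minkowski_prime_aux N d hd3 p hp A heq i j
  have hd2 : d ∣ 2 := by
    have : d ∣ (univ : Finset (Fin N × Fin N)).gcd (fun x => 2 * B x) :=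
      Finset.dvd_gcd fun x _ => by simpa [hA] using hdvd x.1 x.2
    rwa [Finset.gcd_mul_left, hB1, mul_one, show normalize (2:ℤ) = 2 from rfl] at this
  have := Int.le_of_dvd (by norm_num) hd2
  omega

/-- Minkowski's lemma: for `m ≥ 3`, the kernel of the reduction map
`GL_N(ℤ) → GL_N(ℤ/mℤ)` is torsion-free. -/
theorem minkowski_kernel_torsionFree (N m : ℕ) (hm : 3 ≤ m)
    (g : Matrix.GeneralLinearGroup (Fin N) ℤ)
    (hg : g ∈ (Matrix.GeneralLinearGroup.map (Int.castRingHom (ZMod m))).ker)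
    (hfin : IsOfFinOrder g) : g = 1 := by
  have hker : ∀ h : Matrix.GeneralLinearGroup (Fin N) ℤ,
      h ∈ (Matrix.GeneralLinearGroup.map (Int.castRingHom (ZMod m))).ker →
      ∀ i j, (m : ℤ) ∣ ((h : Matrix (Fin N) (Fin N) ℤ) - 1) i j := by
    intro h hh i j
    rw [MonoidHom.mem_ker] at hh
    have h2 : ((Matrix.GeneralLinearGroup.map (Int.castRingHom (ZMod m)) h :
        Matrix (Fin N) (Fin N) (ZMod m))) = (1 : Matrix (Fin N) (Fin N) (ZMod m)) := by
      rw [hh]; rfl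
    have h3 : ((h : Matrix (Fin N) (Fin N) ℤ).map (Int.cast : ℤ → ZMod m)) i j
        = (1 : Matrix (Fin N) (Fin N) (ZMod m)) i j := by rw [← h2]; rfl
    rw [← ZMod.intCast_zmod_eq_zero_iff_dvd]
    simp only [Matrix.sub_apply, Matrix.map_apply] at h3 ⊢
    push_cast
    rw [h3]
    by_cases hij : i = j <;> simp [Matrix.one_apply, hij]
  by_contra hne
  set n := orderOf g with hn
  have hnpos : 0 < n := IsOfFinOrder.orderOf_pos hfin
  have hn1 : n ≠ 1 := fun h => hne (orderOf_eq_one_iff.mp h)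
  set p := n.minFac with hpdef
  have hp : p.Prime := Nat.minFac_prime hn1
  have hpd : p ∣ n := Nat.minFac_dvd n
  set h := g ^ (n / p) with hh
  have hhker : h ∈ (Matrix.GeneralLinearGroup.map (Int.castRingHom (ZMod m))).ker :=
    pow_mem hg _
  have hpow : h ^ p = 1 := by
    rw [hh, ← pow_mul, Nat.div_mul_cancel hpd]
    exact pow_orderOf_eq_one g
  have h1 : h = 1 := minkowski_prime_step N m hm p hp h (hker h hhker) hpow
  have hdvd2 : n ∣ n / p := orderOf_dvd_of_pow_eq_one (by rw [← hh]; exact h1)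
  have hlt : n / p < n := Nat.div_lt_self hnpos hp.one_lt
  have hpos : 0 < n / p := Nat.div_pos (Nat.minFac_le hnpos) hp.pos
  exact absurd (Nat.le_of_dvd hpos hdvd2) (by omega)
end

section
/- For every positive integer r, ∏_{j=1}^r ζ(2j) < 2, where ζ is the Riemann zeta function. -/
open Real
private theorem hs2' : HasSum (fun n : ℕ => (1:ℝ) / ((n:ℝ)+1) ^ 2) (π^2/6) := by
  have h := (hasSum_nat_add_iff' (f := fun n : ℕ => (1:ℝ)/(n:ℝ)^2) (g := π^2/6) 1).mpr
    hasSum_zeta_two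
  simpa using h
private theorem hstail : HasSum (fun n : ℕ => (1:ℝ) / ((n:ℝ)+2) ^ 2) (π^2/6 - 1) := by
  have h := (hasSum_nat_add_iff' (f := fun n : ℕ => (1:ℝ)/((n:ℝ)+1)^2) (g := π^2/6) 1).mpr
    hs2'
  simp only [Finset.range_one, Finset.sum_singleton, Nat.cast_zero] at h
  norm_num at h
  convert h using 2 with n
  · rfl
  · ring_nf
private theorem zsummable (j : ℕ) :
    Summable (fun n : ℕ => (1:ℝ)/((n:ℝ)+1)^(2*(j+1))) := by
  refine Summable.of_nonneg_of_le (fun n => by positivity) (fun n => ?_) hs2'.summable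
  have h1 : (1:ℝ) ≤ (n:ℝ)+1 := by linarith [Nat.cast_nonneg (α := ℝ) n]
  have h2 : ((n:ℝ)+1)^2 ≤ ((n:ℝ)+1)^(2*(j+1)) := pow_le_pow_right₀ h1 (by omega)
  exact one_div_le_one_div_of_le (by positivity) h2
private theorem one_le_zeta (j : ℕ) :
    (1:ℝ) ≤ ∑' n : ℕ, (1:ℝ)/((n:ℝ)+1)^(2*(j+1)) := by
  have h := Summable.le_tsum (zsummable j) 0 (fun m _ => by positivity)
  simpa using h
set_option maxHeartbeats 1000000 in
private theorem zeta_le (j : ℕ) :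
    (∑' n : ℕ, (1:ℝ)/((n:ℝ)+1)^(2*(j+1))) ≤ 1 + (π^2/6 - 1)/4^j := by
  have hsum := zsummable j
  rw [Summable.tsum_eq_zero_add hsum]
  have h0 : (1:ℝ)/(((0:ℕ):ℝ)+1)^(2*(j+1)) = 1 := by norm_num
  rw [h0]
  refine add_le_add_right ?_ 1
  have htail : Summable (fun n : ℕ => (1:ℝ)/(((n+1:ℕ):ℝ)+1)^(2*(j+1))) :=
    (summable_nat_add_iff 1).mpr hsum
  have hg : Summable (fun n : ℕ => (1/(4:ℝ)^j) * ((1:ℝ)/((n:ℝ)+2)^2)) :=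
    hstail.summable.mul_left _
  have hle : ∀ n : ℕ, (1:ℝ)/(((n+1:ℕ):ℝ)+1)^(2*(j+1))
      ≤ (1/(4:ℝ)^j) * ((1:ℝ)/((n:ℝ)+2)^2) := by
    intro n
    have hcast : (((n+1:ℕ):ℝ)+1) = (n:ℝ)+2 := by push_cast; ring
    rw [hcast, one_div_mul_one_div]
    set x : ℝ := (n:ℝ)+2 with hx
    have hx2 : (4:ℝ) ≤ x^2 := by nlinarith [Nat.cast_nonneg (α := ℝ) n]
    have h1 : (4:ℝ)^j ≤ (x^2)^j := pow_le_pow_left₀ (by norm_num) hx2 j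
    have h2 : (4:ℝ)^j * x^2 ≤ (x^2)^j * x^2 :=
      mul_le_mul_of_nonneg_right h1 (by positivity)
    have h3 : (x^2)^j * x^2 = x^(2*(j+1)) := by
      rw [← pow_mul, ← pow_add, show 2*j+2 = 2*(j+1) from by ring]
    exact one_div_le_one_div_of_le (by positivity) (h3 ▸ h2)
  calc ∑' n : ℕ, (1:ℝ)/(((n+1:ℕ):ℝ)+1)^(2*(j+1))
      ≤ ∑' n : ℕ, (1/(4:ℝ)^j) * ((1:ℝ)/((n:ℝ)+2)^2) := Summable.tsum_le_tsum hle htail hg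
    _ = (1/(4:ℝ)^j) * (π^2/6 - 1) := by rw [tsum_mul_left, hstail.tsum_eq]
    _ = (π^2/6 - 1)/4^j := by ring

private theorem hs4' : HasSum (fun n : ℕ => (1:ℝ) / ((n:ℝ)+1) ^ 4) (π^4/90) := by
  have h := (hasSum_nat_add_iff' (f := fun n : ℕ => (1:ℝ)/(n:ℝ)^4) (g := π^4/90) 1).mpr
    hasSum_zeta_four
  simpa using h

/-- For every positive integer `r`, `∏_{j=1}^r ζ(2j) < 2`, with
`ζ(s) = ∑_{n ≥ 1} n^{-s}`. -/
theorem prod_zeta_even_lt_two (r : ℕ) (hr : 1 ≤ r) :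
    (∏ j ∈ Finset.Icc 1 r, ∑' n : ℕ, (1 : ℝ) / ((n : ℝ) + 1) ^ (2 * j)) < 2 := by
  set c : ℝ := π^2/6 - 1 with hc
  have hπ2 : π^2 < 9.9225 := by nlinarith [pi_lt_d2, pi_gt_three]
  have hπ2' : (9:ℝ) < π^2 := by nlinarith [pi_gt_three]
  have hc0 : 0 ≤ c := by rw [hc]; nlinarith
  set B : ℝ := 8*c/3 with hB
  have hB0 : 0 < B := by rw [hB]; nlinarith
  have key : ∀ s : ℕ, 2 ≤ s →
      (∏ j ∈ Finset.Icc 1 s, ∑' n : ℕ, (1 : ℝ) / ((n : ℝ) + 1) ^ (2 * j))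
        ≤ 2 - B/4^s := by
    intro s hs
    induction s, hs using Nat.le_induction with
    | base =>
      have e1 : (∑' n : ℕ, (1 : ℝ) / ((n : ℝ) + 1) ^ (2 * 1)) = π^2/6 := by
        simpa using hs2'.tsum_eq
      have e2 : (∑' n : ℕ, (1 : ℝ) / ((n : ℝ) + 1) ^ (2 * 2)) = π^4/90 := by
        simpa using hs4'.tsum_eq
      have hi : Finset.Icc 1 2 = ({1, 2} : Finset ℕ) := rfl
      rw [hi, Finset.prod_insert (by decide), Finset.prod_singleton, e1, e2]
      have h6 : π^6 < 978 := by nlinarith [pow_lt_pow_left₀ hπ2 (sq_nonneg π) (by norm_num : (3:ℕ) ≠ 0)]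
      rw [hB, hc]
      nlinarith
    | succ s hs ih =>
      rw [Finset.prod_Icc_succ_top (by omega : 1 ≤ s + 1)]
      have hz1 := one_le_zeta s
      have hzle := zeta_le s
      have ht : (0:ℝ) < 4^s := by positivity
      have ht1 : (1:ℝ) ≤ 4^s := one_le_pow₀ (by norm_num)
      have hBd : B/4^s ≤ B := div_le_self hB0.le ht1
      have hB2 : B ≤ 2 := by rw [hB, hc]; nlinarith
      have hstep : (∏ j ∈ Finset.Icc 1 s, ∑' n : ℕ, (1 : ℝ) / ((n : ℝ) + 1) ^ (2 * j))
            * (∑' n : ℕ, (1 : ℝ) / ((n : ℝ) + 1) ^ (2 * (s+1)))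
          ≤ (2 - B/4^s) * (1 + c/4^s) :=
        mul_le_mul ih hzle (by linarith) (by linarith)
      refine hstep.trans ?_
      have hexp : ((2:ℝ) - B/4^s) * (1 + c/4^s)
          = 2 - B/4^(s+1) - 8*c^2/(3*(4^s)^2) := by
        rw [hB, pow_succ]
        field_simp
        ring
      rw [hexp]
      have : 0 ≤ 8*c^2/(3*(4^s)^2) := by positivity
      linarith
  rcases eq_or_lt_of_le hr with h1 | h2
  · rw [← h1]
    have e1 : (∑' n : ℕ, (1 : ℝ) / ((n : ℝ) + 1) ^ (2 * 1)) = π^2/6 := by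
      simpa using hs2'.tsum_eq
    rw [show Finset.Icc 1 1 = ({1} : Finset ℕ) from rfl, Finset.prod_singleton, e1]
    nlinarith
  · have h := key r h2
    have : (0:ℝ) < B/4^r := by positivity
    linarith
end

section
/- For every integer r ≥ 18, 5^{r² + r/2} · ∏_{j=1}^r ((2j-1)!/(2π)^{2j}) > ∏_{j=1}^r (4^j - 1)(9^j - 1). -/
open Finset Real

lemma aux_fact_ge (r : ℕ) (hr : 18 ≤ r) : 130 * 57 ^ r ≤ Nat.factorial (2 * r + 1) := by
  induction r, hr using Nat.le_induction with
  | base => norm_num [Nat.factorial]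
  | succ r hr ih =>
    have h1 : 2 * (r + 1) + 1 = (2 * r + 1) + 2 := by ring
    rw [h1]
    have h2 : Nat.factorial ((2 * r + 1) + 2)
        = ((2 * r + 1) + 2) * (((2 * r + 1) + 1) * Nat.factorial (2 * r + 1)) := rfl
    rw [h2]
    calc 130 * 57 ^ (r + 1) = 57 * (130 * 57 ^ r) := by ring
      _ ≤ 57 * Nat.factorial (2 * r + 1) := Nat.mul_le_mul_left _ ih
      _ ≤ ((2 * r + 1) + 2) * (((2 * r + 1) + 1) * Nat.factorial (2 * r + 1)) := by
          have h3 : 57 ≤ ((2 * r + 1) + 2) * ((2 * r + 1) + 1) := by nlinarith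
          calc 57 * Nat.factorial (2 * r + 1)
              ≤ (((2 * r + 1) + 2) * ((2 * r + 1) + 1)) * Nat.factorial (2 * r + 1) :=
                Nat.mul_le_mul_right _ h3
            _ = _ := by ring

lemma aux_step (r : ℕ) (hr : 18 ≤ r) :
    (36 : ℝ) ^ (r + 1) ≤
      (5 : ℝ) ^ (2 * (r : ℝ) + 3 / 2) * (Nat.factorial (2 * r + 1) : ℝ)
        / (2 * Real.pi) ^ (2 * r + 2) := by
  have hπ : Real.pi < 3.141593 := Real.pi_lt_d6
  have hπ0 : 0 < Real.pi := Real.pi_pos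
  have hp : (0 : ℝ) < (2 * Real.pi) ^ (2 * r + 2) := by positivity
  rw [le_div_iff₀ hp]
  -- bound (2π)^(2r+2)
  have h2π : ((2 * Real.pi) ^ 2) ≤ 39.48 := by nlinarith
  have hpow : (2 * Real.pi) ^ (2 * r + 2) ≤ (39.48 : ℝ) ^ (r + 1) := by
    calc (2 * Real.pi) ^ (2 * r + 2) = ((2 * Real.pi) ^ 2) ^ (r + 1) := by
          rw [← pow_mul]; ring_nf
      _ ≤ (39.48 : ℝ) ^ (r + 1) := pow_le_pow_left₀ (by positivity) h2π _
  -- bound 5^(2r+3/2) from below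
  have h5 : (5 : ℝ) ^ (2 * (r : ℝ) + 3 / 2) = (25 : ℝ) ^ r * (5 : ℝ) ^ ((3 : ℝ) / 2) := by
    rw [Real.rpow_add (by norm_num)]
    congr 1
    rw [show (2 * (r : ℝ)) = ((2 * r : ℕ) : ℝ) by push_cast; ring, Real.rpow_natCast,
      pow_mul]
    norm_num
  have h5half : (11 : ℝ) ≤ (5 : ℝ) ^ ((3 : ℝ) / 2) := by
    have hx : (0:ℝ) ≤ (5 : ℝ) ^ ((3 : ℝ) / 2) := le_of_lt (Real.rpow_pos_of_pos (by norm_num) _)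
    have hsq : ((5 : ℝ) ^ ((3 : ℝ) / 2)) ^ 2 = 125 := by
      rw [← Real.rpow_natCast ((5:ℝ) ^ ((3:ℝ)/2)) 2, ← Real.rpow_mul (by norm_num)]
      norm_num
    nlinarith
  have hfact : (130 : ℝ) * 57 ^ r ≤ (Nat.factorial (2 * r + 1) : ℝ) := by
    exact_mod_cast aux_fact_ge r hr
  have hfa0 : (0:ℝ) ≤ (Nat.factorial (2 * r + 1) : ℝ) := by positivity
  calc (36 : ℝ) ^ (r + 1) * (2 * Real.pi) ^ (2 * r + 2)
      ≤ (36 : ℝ) ^ (r + 1) * (39.48 : ℝ) ^ (r + 1) :=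
        mul_le_mul_of_nonneg_left hpow (by positivity)
    _ = (1421.28 : ℝ) ^ (r + 1) := by rw [← mul_pow]; norm_num
    _ ≤ 1430 * 1425 ^ r := by
        rw [pow_succ, mul_comm]
        exact mul_le_mul (by norm_num) (pow_le_pow_left₀ (by norm_num) (by norm_num) r)
          (by positivity) (by norm_num)
    _ = (11 * (25 : ℝ) ^ r) * (130 * 57 ^ r) := by rw [mul_mul_mul_comm, ← mul_pow]; norm_num
    _ ≤ (11 * (25 : ℝ) ^ r) * (Nat.factorial (2 * r + 1) : ℝ) :=
        mul_le_mul_of_nonneg_left hfact (by positivity)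
    _ ≤ ((5 : ℝ) ^ ((3 : ℝ) / 2) * (25 : ℝ) ^ r) * (Nat.factorial (2 * r + 1) : ℝ) :=
        mul_le_mul_of_nonneg_right (mul_le_mul_of_nonneg_right h5half (by positivity)) hfa0
    _ = (5 : ℝ) ^ (2 * (r : ℝ) + 3 / 2) * (Nat.factorial (2 * r + 1) : ℝ) := by
        rw [h5]; ring


lemma aux_base :
    (5 : ℝ) ^ (((18:ℕ) : ℝ) ^ 2 + ((18:ℕ) : ℝ) / 2) *
        ∏ j ∈ Finset.Icc 1 18,
          (Nat.factorial (2 * j - 1) : ℝ) / (2 * Real.pi) ^ (2 * j) >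
      ∏ j ∈ Finset.Icc 1 18, ((4 : ℝ) ^ j - 1) * ((9 : ℝ) ^ j - 1) := by
  have hπ : Real.pi < 3.141593 := Real.pi_lt_d6
  have hπ0 : 0 < Real.pi := Real.pi_pos
  have hM : ∏ j ∈ Finset.Icc 1 18, ((4 : ℝ) ^ j - 1) * ((9 : ℝ) ^ j - 1)
      = (80991058883481287981687180351795832363800414543516886829013642969536056611883321961100128783521186337395095445985375382383466853430257069785773715807472450812082262821745229384074413951592034165854398449610122147238876143914854611360495388799795200000000000000000000 : ℝ) := by
    norm_num [Finset.prod_Icc_succ_top, Finset.Icc_self]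
  have hN : ∏ j ∈ Finset.Icc 1 18, (Nat.factorial (2 * j - 1) : ℝ) = (26950733017534435481510244078718270865414799576288096307702080034815355484327794717478023411061068824309612198685735363530266064374820342684569638085273083860569755020528780021475836115766052002381353504132933344191809344892753655103501169443471360000000000000000000000000000000000000000000000000000000000000000 : ℝ) := by
    norm_num [Finset.prod_Icc_succ_top, Finset.Icc_self, Nat.factorial]
  have hsum : ∑ j ∈ Finset.Icc 1 18, 2 * j = 342 := by decide
  have hprod : ∏ j ∈ Finset.Icc 1 18,
      (Nat.factorial (2 * j - 1) : ℝ) / (2 * Real.pi) ^ (2 * j)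
      = (26950733017534435481510244078718270865414799576288096307702080034815355484327794717478023411061068824309612198685735363530266064374820342684569638085273083860569755020528780021475836115766052002381353504132933344191809344892753655103501169443471360000000000000000000000000000000000000000000000000000000000000000 : ℝ) / (2 * Real.pi) ^ 342 := by
    rw [Finset.prod_div_distrib, hN, Finset.prod_pow_eq_pow_sum, hsum]
  have hexp : (5 : ℝ) ^ (((18:ℕ) : ℝ) ^ 2 + ((18:ℕ) : ℝ) / 2) = (5:ℝ) ^ (333 : ℕ) := by
    rw [show (((18:ℕ) : ℝ) ^ 2 + ((18:ℕ) : ℝ) / 2) = ((333 : ℕ) : ℝ) by norm_num,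
      Real.rpow_natCast]
  rw [hM, hprod, hexp, gt_iff_lt, ← mul_div_assoc,
    lt_div_iff₀ (by positivity : (0:ℝ) < (2 * Real.pi) ^ 342)]
  calc (80991058883481287981687180351795832363800414543516886829013642969536056611883321961100128783521186337395095445985375382383466853430257069785773715807472450812082262821745229384074413951592034165854398449610122147238876143914854611360495388799795200000000000000000000 : ℝ) * (2 * Real.pi) ^ 342
      ≤ (80991058883481287981687180351795832363800414543516886829013642969536056611883321961100128783521186337395095445985375382383466853430257069785773715807472450812082262821745229384074413951592034165854398449610122147238876143914854611360495388799795200000000000000000000 : ℝ) * (6.283186 : ℝ) ^ 342 := by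
        refine mul_le_mul_of_nonneg_left (pow_le_pow_left₀ (by positivity) (by nlinarith) _) (by positivity)
    _ < (5:ℝ) ^ (333 : ℕ) * (26950733017534435481510244078718270865414799576288096307702080034815355484327794717478023411061068824309612198685735363530266064374820342684569638085273083860569755020528780021475836115766052002381353504132933344191809344892753655103501169443471360000000000000000000000000000000000000000000000000000000000000000 : ℝ) := by
        rw [show (6.283186 : ℝ) = 3141593 / 500000 by norm_num, div_pow, mul_div_assoc', div_lt_iff₀ (by positivity)]
        exact_mod_cast (by decide : (80991058883481287981687180351795832363800414543516886829013642969536056611883321961100128783521186337395095445985375382383466853430257069785773715807472450812082262821745229384074413951592034165854398449610122147238876143914854611360495388799795200000000000000000000 : ℕ) * 3141593 ^ 342 < 5 ^ 333 * 26950733017534435481510244078718270865414799576288096307702080034815355484327794717478023411061068824309612198685735363530266064374820342684569638085273083860569755020528780021475836115766052002381353504132933344191809344892753655103501169443471360000000000000000000000000000000000000000000000000000000000000000 * 500000 ^ 342)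

/-- For `r ≥ 18`, `5^{r² + r/2} · C(r) > ∏_{j=1}^r (4^j - 1)(9^j - 1)`,
where `C(r) = ∏_{j=1}^r (2j-1)!/(2π)^{2j}`. -/
theorem five_pow_C_gt_prod (r : ℕ) (hr : 18 ≤ r) :
    (5 : ℝ) ^ ((r : ℝ) ^ 2 + (r : ℝ) / 2) *
        ∏ j ∈ Finset.Icc 1 r,
          (Nat.factorial (2 * j - 1) : ℝ) / (2 * Real.pi) ^ (2 * j) >
      ∏ j ∈ Finset.Icc 1 r, ((4 : ℝ) ^ j - 1) * ((9 : ℝ) ^ j - 1) := by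
  induction r, hr using Nat.le_induction with
  | base => exact aux_base
  | succ r hr ih =>
    rw [Finset.prod_Icc_succ_top (by omega : 1 ≤ r + 1),
      Finset.prod_Icc_succ_top (by omega : 1 ≤ r + 1)]
    have hsub : 2 * (r + 1) - 1 = 2 * r + 1 := by omega
    have hee : 2 * (r + 1) = 2 * r + 2 := by omega
    rw [hsub, hee]
    have hc : ((r + 1 : ℕ) : ℝ) = (r : ℝ) + 1 := by push_cast; ring
    rw [hc]
    have hsplit : (5 : ℝ) ^ (((r : ℝ) + 1) ^ 2 + ((r : ℝ) + 1) / 2)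
        = (5 : ℝ) ^ ((r : ℝ) ^ 2 + (r : ℝ) / 2) * (5 : ℝ) ^ (2 * (r : ℝ) + 3 / 2) := by
      rw [← Real.rpow_add (by norm_num)]
      ring_nf
    rw [hsplit]
    -- positivity facts
    have hP : (0 : ℝ) ≤ ∏ j ∈ Finset.Icc 1 r,
        (Nat.factorial (2 * j - 1) : ℝ) / (2 * Real.pi) ^ (2 * j) := by
      refine Finset.prod_nonneg fun i _ => ?_
      have := Real.pi_pos
      positivity
    have hb : (0 : ℝ) ≤ (5 : ℝ) ^ ((r : ℝ) ^ 2 + (r : ℝ) / 2) *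
        ∏ j ∈ Finset.Icc 1 r,
          (Nat.factorial (2 * j - 1) : ℝ) / (2 * Real.pi) ^ (2 * j) := by
      have h5 : (0 : ℝ) < (5 : ℝ) ^ ((r : ℝ) ^ 2 + (r : ℝ) / 2) :=
        Real.rpow_pos_of_pos (by norm_num) _
      exact mul_nonneg h5.le hP
    have h4 : (4 : ℝ) ≤ 4 ^ (r + 1) := le_self_pow₀ (by norm_num) (by omega)
    have h9 : (9 : ℝ) ≤ 9 ^ (r + 1) := le_self_pow₀ (by norm_num) (by omega)
    have hf0 : (0 : ℝ) < ((4 : ℝ) ^ (r + 1) - 1) * ((9 : ℝ) ^ (r + 1) - 1) := by nlinarith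
    have hf36 : ((4 : ℝ) ^ (r + 1) - 1) * ((9 : ℝ) ^ (r + 1) - 1) ≤ (36 : ℝ) ^ (r + 1) := by
      have h36 : (36 : ℝ) ^ (r + 1) = 4 ^ (r + 1) * 9 ^ (r + 1) := by
        rw [← mul_pow]; norm_num
      nlinarith
    have hfK : ((4 : ℝ) ^ (r + 1) - 1) * ((9 : ℝ) ^ (r + 1) - 1) ≤
        (5 : ℝ) ^ (2 * (r : ℝ) + 3 / 2) * (Nat.factorial (2 * r + 1) : ℝ)
          / (2 * Real.pi) ^ (2 * r + 2) := hf36.trans (aux_step r hr)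
    calc (∏ j ∈ Finset.Icc 1 r, ((4 : ℝ) ^ j - 1) * ((9 : ℝ) ^ j - 1)) *
          (((4 : ℝ) ^ (r + 1) - 1) * ((9 : ℝ) ^ (r + 1) - 1))
        < ((5 : ℝ) ^ ((r : ℝ) ^ 2 + (r : ℝ) / 2) *
            ∏ j ∈ Finset.Icc 1 r,
              (Nat.factorial (2 * j - 1) : ℝ) / (2 * Real.pi) ^ (2 * j)) *
          ((5 : ℝ) ^ (2 * (r : ℝ) + 3 / 2) * (Nat.factorial (2 * r + 1) : ℝ)
            / (2 * Real.pi) ^ (2 * r + 2)) := mul_lt_mul ih hfK hf0 hb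
      _ = (5 : ℝ) ^ ((r : ℝ) ^ 2 + (r : ℝ) / 2) * (5 : ℝ) ^ (2 * (r : ℝ) + 3 / 2) *
          ((∏ j ∈ Finset.Icc 1 r,
              (Nat.factorial (2 * j - 1) : ℝ) / (2 * Real.pi) ^ (2 * j)) *
            ((Nat.factorial (2 * r + 1) : ℝ) / (2 * Real.pi) ^ (2 * r + 2))) := by ring
end
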